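/- Assume B is irreducible and SNR(λ,B) > 1. Then there exists a real symmetric L×L matrix M with 0 ≺ M ≺ B (M positive definite and B − M positive definite) solving the matrix Dyson equation at z = 1, i.e. M^{-1} = B^{-1} + Λ − Diag(λ⊙diag(M)). -/

import Mathlib

open Matrix

/-- A square matrix is irreducible if there is no nonempty proper subset `S` of the index set
with `A i j = 0` for all `i ∈ S` and `j ∉ S`. -/
def MatrixIrreducible {L : ℕ} (A : Matrix (Fin L) (Fin L) ℝ) : Prop :=
  ¬ ∃ S : Finset (Fin L), S.Nonempty ∧ S ≠ Finset.univ ∧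
      ∀ i ∈ S, ∀ j ∉ S, A i j = 0

section AuxStmt6

variable {L : ℕ}

private lemma stmt6_diag_nonneg {Q : Matrix (Fin L) (Fin L) ℝ} (hQ : Q.PosSemidef) (l : Fin L) :
    0 ≤ Q l l := by
  have := hQ.dotProduct_mulVec_nonneg (Pi.single l 1)
  simpa [dotProduct, mulVec, Pi.single_apply, Finset.sum_ite_eq] using this

private lemma stmt6_diag_pos {Q : Matrix (Fin L) (Fin L) ℝ} (hQ : Q.PosDef) (l : Fin L) :
    0 < Q l l := by
  have := hQ.dotProduct_mulVec_pos (x := Pi.single l 1) (by simp [Pi.single_eq_same, funext_iff]; exact ⟨l, by simp⟩)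
  simpa [dotProduct, mulVec, Pi.single_apply, Finset.sum_ite_eq] using this

private lemma stmt6_pd_conj {P X : Matrix (Fin L) (Fin L) ℝ} (hP : P.PosDef)
    (hX : IsUnit X.det) : (Xᴴ * P * X).PosDef := by
  refine PosDef.of_dotProduct_mulVec_pos (isHermitian_conjTranspose_mul_mul X hP.1) fun x hx => ?_
  have hXx : X *ᵥ x ≠ 0 := by
    have hinj : Function.Injective (X.mulVec) :=
      mulVec_injective_iff_isUnit.2 (isUnit_iff_isUnit_det X |>.2 hX)
    intro h
    exact hx (hinj (by simpa using h))
  simpa only [star_mulVec, dotProduct_mulVec, vecMul_vecMul] using hP.dotProduct_mulVec_pos hXx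

private lemma stmt6_inv_sub_inv {A P : Matrix (Fin L) (Fin L) ℝ}
    (hA : A.PosDef) (hP : P.PosSemidef) :
    (A⁻¹ - (A + P)⁻¹).PosSemidef ∧ (P.PosDef → (A⁻¹ - (A + P)⁻¹).PosDef) := by
  set C := A + P with hCdef
  have hC : C.PosDef := hA.add_posSemidef hP
  have hAd : IsUnit A.det := hA.det_pos.ne'.isUnit
  have hCd : IsUnit C.det := hC.det_pos.ne'.isUnit
  have hPC : P = C - A := by rw [hCdef]; abel
  have e1 : A⁻¹ - C⁻¹ = A⁻¹ * P * C⁻¹ := by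
    rw [hPC, mul_sub, sub_mul, Matrix.mul_assoc, Matrix.mul_nonsing_inv _ hCd,
      Matrix.nonsing_inv_mul _ hAd, Matrix.mul_one, Matrix.one_mul]
  have e2 : A⁻¹ - C⁻¹ = C⁻¹ * P * A⁻¹ := by
    rw [hPC, mul_sub, sub_mul, Matrix.nonsing_inv_mul _ hCd,
      Matrix.mul_assoc C⁻¹ A A⁻¹, Matrix.mul_nonsing_inv _ hAd, Matrix.mul_one, Matrix.one_mul]
  have e3 : A⁻¹ = C⁻¹ + A⁻¹ * P * C⁻¹ := by rw [← e1]; abel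
  have hconj : (C⁻¹ * P)ᴴ = P * C⁻¹ := by
    rw [conjTranspose_mul, hP.1.eq, hC.inv.isHermitian.eq]
  have main : A⁻¹ - C⁻¹ = C⁻¹ * P * C⁻¹ + (C⁻¹ * P) * A⁻¹ * (C⁻¹ * P)ᴴ := by
    rw [hconj]
    calc A⁻¹ - C⁻¹ = C⁻¹ * P * A⁻¹ := e2
      _ = C⁻¹ * P * (C⁻¹ + A⁻¹ * P * C⁻¹) := by rw [← e3]
      _ = C⁻¹ * P * C⁻¹ + C⁻¹ * P * A⁻¹ * (P * C⁻¹) := by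
          simp only [Matrix.mul_add, Matrix.mul_assoc]
  constructor
  · rw [main]
    refine PosSemidef.add ?_ ?_
    · have := hP.mul_mul_conjTranspose_same C⁻¹
      rwa [hC.inv.isHermitian.eq] at this
    · exact (hA.inv.posSemidef).mul_mul_conjTranspose_same _
  · intro hPd
    rw [main]
    refine PosDef.add_posSemidef ?_ ((hA.inv.posSemidef).mul_mul_conjTranspose_same _)
    have := stmt6_pd_conj (P := P) (X := C⁻¹) hPd hC.inv.det_pos.ne'.isUnit
    rwa [hC.inv.isHermitian.eq] at this

private lemma stmt6_Bsub_psd {B : Matrix (Fin L) (Fin L) ℝ} (hB : B.PosDef) {e : Fin L → ℝ}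
    (he : ∀ l, 0 ≤ e l) : (B - (B⁻¹ + diagonal e)⁻¹).PosSemidef := by
  have h := (stmt6_inv_sub_inv hB.inv (posSemidef_diagonal_iff.mpr he)).1
  rwa [Matrix.nonsing_inv_nonsing_inv B hB.det_pos.ne'.isUnit] at h

private lemma stmt6_mono {B : Matrix (Fin L) (Fin L) ℝ} (hB : B.PosDef) {a b : Fin L → ℝ}
    (ha : ∀ l, 0 ≤ a l) (hab : ∀ l, a l ≤ b l) (l : Fin L) :
    ((B⁻¹ + diagonal b)⁻¹) l l ≤ ((B⁻¹ + diagonal a)⁻¹) l l := by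
  have hA : (B⁻¹ + diagonal a).PosDef :=
    hB.inv.add_posSemidef (posSemidef_diagonal_iff.mpr ha)
  have hP : (diagonal (b - a) : Matrix (Fin L) (Fin L) ℝ).PosSemidef :=
    posSemidef_diagonal_iff.mpr (fun l => by
      simpa [Pi.sub_apply] using sub_nonneg.2 (hab l))
  have h := (stmt6_inv_sub_inv hA hP).1
  have he : B⁻¹ + diagonal a + diagonal (b - a) = B⁻¹ + diagonal b := by
    rw [add_assoc, diagonal_add]
    congr 2
    funext k
    simp
  rw [he] at h
  have := stmt6_diag_nonneg h l
  rw [Matrix.sub_apply] at this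
  linarith

private lemma stmt6_lower_bound {B : Matrix (Fin L) (Fin L) ℝ} (hB : B.PosDef) (v : Fin L → ℝ)
    (hv : ∀ l, 0 ≤ v l) (t : ℝ) (ht : 0 ≤ t) (l : Fin L) :
    t * (B * (diagonal v * B)) l l
      - t ^ 2 * (B * (diagonal v * (B * (diagonal v * B)))) l l
      ≤ (B - (B⁻¹ + diagonal (t • v))⁻¹) l l := by
  have htv : ∀ k, 0 ≤ (t • v) k := fun k => mul_nonneg ht (hv k)
  set D : Matrix (Fin L) (Fin L) ℝ := diagonal (t • v) with hDdef
  set N : Matrix (Fin L) (Fin L) ℝ := B⁻¹ + D with hNdef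
  have hN : N.PosDef := hB.inv.add_posSemidef (posSemidef_diagonal_iff.mpr htv)
  set M : Matrix (Fin L) (Fin L) ℝ := N⁻¹ with hMdef
  have hBd : IsUnit B.det := hB.det_pos.ne'.isUnit
  have hNd : IsUnit N.det := hN.det_pos.ne'.isUnit
  have hBN : B * N = 1 + B * D := by
    rw [hNdef, Matrix.mul_add, Matrix.mul_nonsing_inv _ hBd]
  have hNB : N * B = 1 + D * B := by
    rw [hNdef, Matrix.add_mul, Matrix.nonsing_inv_mul _ hBd]
  have h1 : B - M = B * (D * M) := by
    have hthis : B * (N * M) = B := by rw [hMdef, Matrix.mul_nonsing_inv _ hNd, Matrix.mul_one]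
    rw [← Matrix.mul_assoc, hBN, Matrix.add_mul, Matrix.one_mul, Matrix.mul_assoc] at hthis
    conv_lhs => rw [← hthis]
    abel
  have h2 : B - M = M * (D * B) := by
    have hthis : M * (N * B) = B := by
      rw [← Matrix.mul_assoc, hMdef, Matrix.nonsing_inv_mul _ hNd, Matrix.one_mul]
    rw [hNB, Matrix.mul_add, Matrix.mul_one] at hthis
    conv_lhs => rw [← hthis]
    abel
  have hM : M = B - M * (D * B) := by rw [← h2]; abel
  have h3 : B - M = B * (D * B) - B * (D * (M * (D * B))) := by
    rw [h1]
    conv_lhs => rw [hM]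
    rw [Matrix.mul_sub, Matrix.mul_sub]
  have hBMpsd : (B - M).PosSemidef := stmt6_Bsub_psd hB htv
  have hct : (B * diagonal v)ᴴ = diagonal v * B := by
    rw [conjTranspose_mul, diagonal_conjTranspose, hB.1.eq, star_trivial]
  have hpsd2 : ((B * diagonal v) * (B - M) * (B * diagonal v)ᴴ).PosSemidef :=
    hBMpsd.mul_mul_conjTranspose_same _
  have hexp : (B * diagonal v) * (B - M) * (B * diagonal v)ᴴ
      = B * (diagonal v * (B * (diagonal v * B)))
        - B * (diagonal v * (M * (diagonal v * B))) := by
    rw [hct]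
    simp only [Matrix.mul_sub, Matrix.sub_mul, Matrix.mul_assoc]
  rw [hexp] at hpsd2
  have hkey : (B * (diagonal v * (M * (diagonal v * B)))) l l
      ≤ (B * (diagonal v * (B * (diagonal v * B)))) l l := by
    have h0 : 0 ≤ (B * (diagonal v * (B * (diagonal v * B)))
        - B * (diagonal v * (M * (diagonal v * B)))) l l := by
      have := hpsd2.dotProduct_mulVec_nonneg (Pi.single l 1)
      simpa [dotProduct, mulVec, Pi.single_apply, Finset.sum_ite_eq] using this
    rw [Matrix.sub_apply] at h0
    linarith
  have hDv : D = t • diagonal v := by rw [hDdef, diagonal_smul]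
  have h4 : B - M = t • (B * (diagonal v * B))
      - (t * t) • (B * (diagonal v * (M * (diagonal v * B)))) := by
    rw [h3, hDv]
    simp only [Matrix.mul_smul, Matrix.smul_mul, smul_smul]
  have e4 := congrFun (congrFun h4 l) l
  simp only [Matrix.sub_apply, Matrix.smul_apply, smul_eq_mul] at e4
  rw [Matrix.sub_apply]
  rw [e4]
  have hsq : 0 ≤ t * t := mul_nonneg ht ht
  have h5 := mul_le_mul_of_nonneg_left hkey hsq
  nlinarith [h5]

private lemma stmt6_perron [NeZero L] {S : Matrix (Fin L) (Fin L) ℝ} (hS : S.IsHermitian)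
    (hnn : ∀ i j, 0 ≤ S i j)
    (hirr : ∀ T : Finset (Fin L), T.Nonempty → T ≠ Finset.univ →
      ∃ i ∈ T, ∃ j ∉ T, S i j ≠ 0) :
    ∃ u : Fin L → ℝ, (∀ l, 0 < u l) ∧ S *ᵥ u = (⨆ i, hS.eigenvalues i) • u := by
  obtain ⟨i0, hi0⟩ := Finite.exists_max hS.eigenvalues
  have hrho : (⨆ i, hS.eigenvalues i) = hS.eigenvalues i0 :=
    le_antisymm (ciSup_le hi0) (le_ciSup (Set.Finite.bddAbove (Set.finite_range _)) i0)
  set ρ := hS.eigenvalues i0 with hρdef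
  set w : Fin L → ℝ := ⇑(hS.eigenvectorBasis i0) with hwdef
  have hw : S *ᵥ w = ρ • w := hS.mulVec_eigenvectorBasis i0
  have hwne : w ≠ 0 := by
    have := hS.eigenvectorBasis.orthonormal.ne_zero i0
    intro h; apply this; ext j; exact congrFun h j
  set u : Fin L → ℝ := fun l => |w l| with hudef
  set U : Matrix (Fin L) (Fin L) ℝ := (hS.eigenvectorUnitary : Matrix (Fin L) (Fin L) ℝ)
    with hUdef
  have hUU : U * star U = 1 := (Matrix.mem_unitaryGroup_iff).mp (hS.eigenvectorUnitary).2
  have hTps : (ρ • (1 : Matrix (Fin L) (Fin L) ℝ) - S).PosSemidef := by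
    have hspec : S = U * Matrix.diagonal hS.eigenvalues * star U := by
      have := hS.spectral_theorem
      simpa [RCLike.ofReal_real_eq_id] using this
    have h1 : ρ • (1 : Matrix (Fin L) (Fin L) ℝ) = U * (ρ • 1) * star U := by
      rw [Matrix.mul_smul, Matrix.smul_mul, Matrix.mul_one, hUU]
    have h2 : ρ • (1 : Matrix (Fin L) (Fin L) ℝ) - S
        = U * (Matrix.diagonal (fun i => ρ - hS.eigenvalues i)) * star U := by
      rw [h1]
      conv_lhs => rw [hspec]
      rw [← Matrix.sub_mul, ← Matrix.mul_sub, Matrix.smul_one_eq_diagonal, Matrix.diagonal_sub]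
    rw [h2, Matrix.star_eq_conjTranspose]
    exact (Matrix.posSemidef_diagonal_iff.mpr
      fun i => sub_nonneg.2 (hi0 i)).mul_mul_conjTranspose_same U
  have huu : u ⬝ᵥ u = w ⬝ᵥ w := by
    simp only [dotProduct, hudef]
    exact Finset.sum_congr rfl fun i _ => by rw [← abs_mul, abs_mul_self]
  have hqu : w ⬝ᵥ (S *ᵥ w) ≤ u ⬝ᵥ (S *ᵥ u) := by
    simp only [dotProduct, mulVec, dotProduct, Finset.mul_sum]
    refine Finset.sum_le_sum fun i _ => Finset.sum_le_sum fun j _ => ?_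
    calc w i * (S i j * w j) ≤ |w i * (S i j * w j)| := le_abs_self _
      _ = u i * (S i j * u j) := by
          rw [abs_mul, abs_mul, abs_of_nonneg (hnn i j)]
  have hwSw : w ⬝ᵥ (S *ᵥ w) = ρ * (w ⬝ᵥ w) := by
    rw [hw, dotProduct_smul, smul_eq_mul]
  have hTu : (ρ • (1 : Matrix (Fin L) (Fin L) ℝ) - S) *ᵥ u = 0 := by
    rw [← hTps.dotProduct_mulVec_zero_iff, star_trivial]
    have hge : 0 ≤ u ⬝ᵥ ((ρ • (1 : Matrix (Fin L) (Fin L) ℝ) - S) *ᵥ u) := by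
      have := hTps.dotProduct_mulVec_nonneg u
      rwa [star_trivial] at this
    have hle : u ⬝ᵥ ((ρ • (1 : Matrix (Fin L) (Fin L) ℝ) - S) *ᵥ u) ≤ 0 := by
      rw [Matrix.sub_mulVec, dotProduct_sub, smul_mulVec, Matrix.one_mulVec,
        dotProduct_smul, smul_eq_mul, huu]
      have := hqu
      rw [hwSw] at this
      linarith
    linarith
  have hSu : S *ᵥ u = ρ • u := by
    have h := hTu
    rw [Matrix.sub_mulVec, smul_mulVec, Matrix.one_mulVec, sub_eq_zero] at h
    exact h.symm
  have hupos : ∀ l, 0 < u l := by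
    by_contra hcon
    push_neg at hcon
    obtain ⟨l0, hl0⟩ := hcon
    have hl0 : u l0 = 0 := le_antisymm hl0 (abs_nonneg _)
    set T : Finset (Fin L) := Finset.univ.filter (fun l => u l = 0) with hT
    have hTne : T.Nonempty := ⟨l0, by simp [hT, hl0]⟩
    have hTnu : T ≠ Finset.univ := by
      intro h
      apply hwne
      ext j
      have : j ∈ T := h ▸ Finset.mem_univ j
      simp only [hT, Finset.mem_filter] at this
      exact abs_eq_zero.mp this.2
    obtain ⟨i, hiT, j, hjT, hij⟩ := hirr T hTne hTnu
    have hui : u i = 0 := by simp only [hT, Finset.mem_filter] at hiT; exact hiT.2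
    have huj : u j ≠ 0 := by
      simp only [hT, Finset.mem_filter, Finset.mem_univ, true_and] at hjT; exact hjT
    have hsum : (S *ᵥ u) i = 0 := by rw [hSu]; simp [hui]
    simp only [mulVec, dotProduct] at hsum
    rw [Finset.sum_eq_zero_iff_of_nonneg
      (fun k _ => mul_nonneg (hnn i k) (abs_nonneg _))] at hsum
    have := hsum j (Finset.mem_univ j)
    rcases mul_eq_zero.mp this with h | h
    · exact hij h
    · exact huj h
  exact ⟨u, hupos, by rw [hrho]; exact hSu⟩

end AuxStmt6

/-- if `B` is irreducible and `SNR(λ,B) > 1` (largest eigenvalue of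
`Diag(√λ)(B⊙B)Diag(√λ)` greater than one), then there is a real symmetric matrix `M`
with `0 ≺ M ≺ B` solving the matrix Dyson equation at `z = 1`:
`M⁻¹ = B⁻¹ + Λ − Diag(λ ⊙ diag M)`. -/
theorem stmt6 {L : ℕ} (hL : 0 < L) (lam : Fin L → ℝ) (hlam : ∀ l, 0 < lam l)
    (B : Matrix (Fin L) (Fin L) ℝ) (hB : B.PosDef) (hBdiag : ∀ l, B l l = 1)
    (hIrr : MatrixIrreducible B)
    (hS : (Matrix.diagonal (fun l => Real.sqrt (lam l)) * Matrix.hadamard B B *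
        Matrix.diagonal (fun l => Real.sqrt (lam l))).IsHermitian)
    (hSNR : 1 < ⨆ i, hS.eigenvalues i) :
    ∃ M : Matrix (Fin L) (Fin L) ℝ, Mᵀ = M ∧ M.PosDef ∧ (B - M).PosDef ∧
      M⁻¹ = B⁻¹ + Matrix.diagonal lam - Matrix.diagonal (fun l => lam l * M l l) := by
  haveI : NeZero L := ⟨hL.ne'⟩
  set s : Fin L → ℝ := fun l => Real.sqrt (lam l) with hsdef
  have hs : ∀ l, 0 < s l := fun l => Real.sqrt_pos.2 (hlam l)
  have hss : ∀ l, s l * s l = lam l := fun l => Real.mul_self_sqrt (hlam l).le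
  set Sm : Matrix (Fin L) (Fin L) ℝ :=
    Matrix.diagonal (fun l => Real.sqrt (lam l)) * Matrix.hadamard B B *
      Matrix.diagonal (fun l => Real.sqrt (lam l)) with hSmdef
  have hSapp : ∀ i j, Sm i j = s i * (B i j * B i j) * s j := by
    intro i j
    rw [hSmdef]
    simp [Matrix.mul_diagonal, Matrix.diagonal_mul, Matrix.hadamard_apply, hsdef]
  have hnn : ∀ i j, 0 ≤ Sm i j := by
    intro i j
    rw [hSapp]
    have := mul_self_nonneg (B i j)
    positivity
  have hsym : ∀ a b, B a b = B b a := by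
    intro a b
    conv_lhs => rw [← hB.1.eq]
    simp [conjTranspose_apply]
  have hirr : ∀ T : Finset (Fin L), T.Nonempty → T ≠ Finset.univ →
      ∃ i ∈ T, ∃ j ∉ T, Sm i j ≠ 0 := by
    intro T hTne hTnu
    by_contra hcon
    push_neg at hcon
    apply hIrr
    refine ⟨T, hTne, hTnu, fun i hi j hj => ?_⟩
    have hz := hcon i hi j hj
    rw [hSapp] at hz
    have hB0 : B i j * B i j = 0 := by
      rcases mul_eq_zero.mp hz with h | h
      · rcases mul_eq_zero.mp h with h' | h'
        · exact absurd h' (hs i).ne'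
        · exact h'
      · exact absurd h (hs j).ne'
    exact mul_self_eq_zero.mp hB0
  obtain ⟨u, hupos, hSu⟩ := stmt6_perron hS hnn hirr
  set ρ : ℝ := ⨆ i, hS.eigenvalues i with hρdef
  have hρ : 1 < ρ := hSNR
  set v : Fin L → ℝ := fun l => s l * u l with hvdef
  have hvpos : ∀ l, 0 < v l := fun l => mul_pos (hs l) (hupos l)
  have hvnn : ∀ l, 0 ≤ v l := fun l => (hvpos l).le
  have hSul : ∀ l, ∑ k, Sm l k * u k = ρ * u l := by
    intro l
    have := congrFun hSu l
    simpa [mulVec, dotProduct] using this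
  have heig : ∀ l, lam l * (∑ k, B l k * (v k * B k l)) = ρ * v l := by
    intro l
    have h2 : lam l * (∑ k, B l k * (v k * B k l)) = s l * ∑ k, Sm l k * u k := by
      rw [Finset.mul_sum, Finset.mul_sum]
      refine Finset.sum_congr rfl fun k _ => ?_
      rw [hSapp l k, hsym k l, hvdef, ← hss l]
      ring
    rw [h2, hSul l, hvdef]
    ring
  -- the two constant matrices
  set G1 : Matrix (Fin L) (Fin L) ℝ := B * (diagonal v * B) with hG1def
  set G2 : Matrix (Fin L) (Fin L) ℝ := B * (diagonal v * (B * (diagonal v * B))) with hG2def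
  have hG1entry : ∀ l, G1 l l = ∑ k, B l k * (v k * B k l) := by
    intro l
    rw [hG1def, Matrix.mul_apply]
    exact Finset.sum_congr rfl fun k _ => by rw [Matrix.diagonal_mul]
  -- choice of t
  set g : Fin L → ℝ := fun l => min ((ρ - 1) * v l / (lam l * |G2 l l| + 1)) (lam l / v l)
    with hgdef
  have hgpos : ∀ l, 0 < g l := by
    intro l
    have habs : (0:ℝ) ≤ |G2 l l| := abs_nonneg _
    have hden : (0:ℝ) < lam l * |G2 l l| + 1 := by nlinarith [hlam l]
    refine lt_min (div_pos (mul_pos (by linarith) (hvpos l)) hden)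
      (div_pos (hlam l) (hvpos l))
  set t : ℝ := Finset.univ.inf' Finset.univ_nonempty g with htdef
  have ht0 : 0 < t := by
    rw [htdef, Finset.lt_inf'_iff]
    exact fun l _ => hgpos l
  have htg : ∀ l, t ≤ g l := fun l => Finset.inf'_le g (Finset.mem_univ l)
  have htq : ∀ l, t * (lam l * |G2 l l| + 1) ≤ (ρ - 1) * v l := by
    intro l
    have h1 : t ≤ (ρ - 1) * v l / (lam l * |G2 l l| + 1) :=
      le_trans (htg l) (min_le_left _ _)
    have hpos : (0:ℝ) < lam l * |G2 l l| + 1 := by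
      nlinarith [hlam l, abs_nonneg (G2 l l)]
    calc t * (lam l * |G2 l l| + 1)
        ≤ ((ρ - 1) * v l / (lam l * |G2 l l| + 1)) * (lam l * |G2 l l| + 1) := by
          exact mul_le_mul_of_nonneg_right h1 hpos.le
      _ = (ρ - 1) * v l := by field_simp
  have htvlam : ∀ l, t * v l ≤ lam l := by
    intro l
    have h1 : t ≤ lam l / v l := le_trans (htg l) (min_le_right _ _)
    rw [← le_div_iff₀ (hvpos l)]
    exact h1
  have htvnn : ∀ k, 0 ≤ (t • v) k := fun k => mul_nonneg ht0.le (hvnn k)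
  -- key inequality: F(t • v) ≥ t • v
  have hFlow : ∀ l, t * v l ≤ lam l * (1 - ((B⁻¹ + diagonal (t • v))⁻¹) l l) := by
    intro l
    have hlb := stmt6_lower_bound hB v hvnn t ht0.le l
    rw [Matrix.sub_apply, hBdiag l] at hlb
    have h1 : lam l * (t * G1 l l - t ^ 2 * G2 l l)
        ≤ lam l * (1 - ((B⁻¹ + diagonal (t • v))⁻¹) l l) :=
      mul_le_mul_of_nonneg_left hlb (hlam l).le
    have hG1v : lam l * G1 l l = ρ * v l := by rw [hG1entry l]; exact heig l
    have habs : G2 l l ≤ |G2 l l| := le_abs_self _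
    have hq := htq l
    nlinarith [h1, hG1v, habs, hq, ht0, hvpos l, hlam l, sq_nonneg t,
      mul_le_mul_of_nonneg_left habs (mul_nonneg (mul_nonneg ht0.le ht0.le) (hlam l).le)]
  -- the iteration
  set F : (Fin L → ℝ) → (Fin L → ℝ) :=
    fun e l => lam l * (1 - ((B⁻¹ + diagonal e)⁻¹) l l) with hFdef
  set d : ℕ → Fin L → ℝ := fun n => Nat.rec lam (fun _ prev => F prev) n with hddef
  have hd0 : d 0 = lam := rfl
  have hds : ∀ n, d (n + 1) = F (d n) := fun n => rfl
  have hMpd : ∀ e : Fin L → ℝ, (∀ l, 0 ≤ e l) → ((B⁻¹ + diagonal e)⁻¹).PosDef :=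
    fun e he => (hB.inv.add_posSemidef (posSemidef_diagonal_iff.mpr he)).inv
  -- lower invariant
  have hlow : ∀ n l, t * v l ≤ d n l := by
    intro n
    induction n with
    | zero => intro l; rw [hd0]; exact htvlam l
    | succ n ih =>
      intro l
      rw [hds n]
      simp only [hFdef]
      have hmm := stmt6_mono hB (a := t • v) (b := d n) htvnn
        (fun k => by simpa [Pi.smul_apply, smul_eq_mul] using ih k) l
      have := hFlow l
      have hstep : lam l * (1 - ((B⁻¹ + diagonal (t • v))⁻¹) l l)
          ≤ lam l * (1 - ((B⁻¹ + diagonal (d n))⁻¹) l l) := by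
        nlinarith [hmm, hlam l]
      calc t * v l ≤ lam l * (1 - ((B⁻¹ + diagonal (t • v))⁻¹) l l) := hFlow l
        _ ≤ lam l * (1 - ((B⁻¹ + diagonal (d n))⁻¹) l l) := hstep
  have hdnn : ∀ n l, 0 ≤ d n l :=
    fun n l => le_trans (mul_nonneg ht0.le (hvnn l)) (hlow n l)
  -- decreasing invariant
  have hdec : ∀ n l, d (n + 1) l ≤ d n l := by
    intro n
    induction n with
    | zero =>
      intro l
      rw [hds 0, hd0]
      simp only [hFdef]
      have hMl := stmt6_diag_pos (hMpd lam (fun k => (hlam k).le)) l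
      nlinarith [hlam l, hMl]
    | succ n ih =>
      intro l
      rw [hds (n+1), hds n]
      simp only [hFdef]
      have hmm := stmt6_mono hB (a := d (n+1)) (b := d n) (hdnn (n+1)) ih l
      nlinarith [hmm, hlam l]
  -- limit
  set dstar : Fin L → ℝ := fun l => ⨅ n, d n l with hdstardef
  have hanti : ∀ l, Antitone (fun n => d n l) :=
    fun l => antitone_nat_of_succ_le (fun n => hdec n l)
  have hbdd : ∀ l, BddBelow (Set.range (fun n => d n l)) :=
    fun l => ⟨t * v l, by rintro x ⟨n, rfl⟩; exact hlow n l⟩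
  have hten : ∀ l, Filter.Tendsto (fun n => d n l) Filter.atTop (nhds (dstar l)) :=
    fun l => tendsto_atTop_ciInf (hanti l) (hbdd l)
  have hdslow : ∀ l, t * v l ≤ dstar l := fun l => le_ciInf (fun n => hlow n l)
  have hdsnn : ∀ l, 0 ≤ dstar l :=
    fun l => le_trans (mul_nonneg ht0.le (hvnn l)) (hdslow l)
  have hdspos : ∀ l, 0 < dstar l :=
    fun l => lt_of_lt_of_le (mul_pos ht0 (hvpos l)) (hdslow l)
  have htenpi : Filter.Tendsto d Filter.atTop (nhds dstar) :=
    tendsto_pi_nhds.mpr hten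
  -- continuity and fixed point
  have hNstar : (B⁻¹ + diagonal dstar).PosDef :=
    hB.inv.add_posSemidef (posSemidef_diagonal_iff.mpr hdsnn)
  have hfix : ∀ l, lam l * (1 - ((B⁻¹ + diagonal dstar)⁻¹) l l) = dstar l := by
    intro l
    have hu : IsUnit (B⁻¹ + diagonal dstar).det := hNstar.det_pos.ne'.isUnit
    have h2 : ContinuousAt Inv.inv (B⁻¹ + diagonal dstar) :=
      continuousAt_matrix_inv _ (hu.unit_spec ▸ NormedRing.inverse_continuousAt hu.unit)
    have hdiag : Filter.Tendsto (fun n => diagonal (d n)) Filter.atTop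
        (nhds (diagonal dstar)) :=
      ((continuous_id.matrix_diagonal).tendsto dstar).comp htenpi
    have hadd : Filter.Tendsto (fun n => B⁻¹ + diagonal (d n)) Filter.atTop
        (nhds (B⁻¹ + diagonal dstar)) := tendsto_const_nhds.add hdiag
    have hinv : Filter.Tendsto (fun n => (B⁻¹ + diagonal (d n))⁻¹) Filter.atTop
        (nhds ((B⁻¹ + diagonal dstar)⁻¹)) := h2.tendsto.comp hadd
    have h3 : Continuous (fun A : Matrix (Fin L) (Fin L) ℝ => A l l) :=
      (continuous_apply l).comp (continuous_apply l)
    have hMl : Filter.Tendsto (fun n => ((B⁻¹ + diagonal (d n))⁻¹) l l) Filter.atTop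
        (nhds (((B⁻¹ + diagonal dstar)⁻¹) l l)) := (h3.tendsto _).comp hinv
    have hFl : Filter.Tendsto (fun n => F (d n) l) Filter.atTop
        (nhds (lam l * (1 - ((B⁻¹ + diagonal dstar)⁻¹) l l))) := by
      simp only [hFdef]
      exact (tendsto_const_nhds.sub hMl).const_mul _
    have hsh : Filter.Tendsto (fun n => d (n + 1) l) Filter.atTop (nhds (dstar l)) := by
      have := (Filter.tendsto_add_atTop_iff_nat (f := fun m => d m l)
        (l := nhds (dstar l)) 1).mpr (hten l)
      simpa using this
    have heq : (fun n => d (n + 1) l) = (fun n => F (d n) l) := by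
      funext n; rw [hds n]
    rw [heq] at hsh
    exact tendsto_nhds_unique hFl hsh
  -- final assembly
  refine ⟨(B⁻¹ + diagonal dstar)⁻¹, ?_, ?_, ?_, ?_⟩
  · rw [← Matrix.conjTranspose_eq_transpose_of_trivial]
    exact hNstar.inv.isHermitian.eq
  · exact hNstar.inv
  · have hPd : (diagonal dstar : Matrix (Fin L) (Fin L) ℝ).PosDef :=
      Matrix.posDef_diagonal_iff.mpr hdspos
    have h := (stmt6_inv_sub_inv hB.inv (posSemidef_diagonal_iff.mpr hdsnn)).2 hPd
    rwa [Matrix.nonsing_inv_nonsing_inv B hB.det_pos.ne'.isUnit] at h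
  · rw [Matrix.nonsing_inv_nonsing_inv _ hNstar.det_pos.ne'.isUnit]
    have hdd : diagonal dstar = Matrix.diagonal lam
        - Matrix.diagonal (fun l => lam l * ((B⁻¹ + diagonal dstar)⁻¹) l l) := by
      rw [Matrix.diagonal_sub]
      refine congrArg diagonal (funext fun l => ?_)
      have hf := hfix l
      nlinarith [hf, hlam l]
    rw [add_sub_assoc, ← hdd]
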